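/- Assume δ > 0, β₀ > 0 and β₁ < −δ/(β₀(1 − 2h(x₀))); let x_c ∈ (0, π), τ_c and ω_c = x_c/τ_c be as determined by the system h(ωτ) = (δ + β₀β₁)/(2β₀β₁), (cos(ωτ) − 1)/(ωτ)² = 1/(2β₀β₁τ). Then the transversality quantity ν′ := Re(−Δ_τ(iω_c, τ_c)/Δ_λ(iω_c, τ_c)) satisfies |Δ_λ(iω_c, τ_c)|² · ν′ = (2β₀β₁/τ_c)·(x_c cos(x_c) − sin(x_c))/x_c, and this quantity is strictly positive; hence ν′ > 0. -/

import Mathlib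

set_option maxHeartbeats 1000000

/-- `Δ_λ(λ,τ) = 1 − (2β₀β₁/τ)∫_{−τ}^{0} s e^{λ s} ds`, the partial derivative in `λ`
of the characteristic function. -/
noncomputable def charFnD (β₀ β₁ τ : ℝ) (lam : ℂ) : ℂ :=
  1 - ((2 * β₀ * β₁ / τ : ℝ) : ℂ) * ∫ s in (-τ)..(0 : ℝ), (s : ℂ) * Complex.exp (lam * (s : ℂ))

/-- `Δ_τ(λ,τ) = (2β₀β₁/τ²)∫_{−τ}^{0} e^{λ s} ds − (2β₀β₁/τ)e^{−λτ}`, the partial derivative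
in `τ` of the characteristic function. -/
noncomputable def charFnT (β₀ β₁ τ : ℝ) (lam : ℂ) : ℂ :=
  ((2 * β₀ * β₁ / τ ^ 2 : ℝ) : ℂ) * (∫ s in (-τ)..(0 : ℝ), Complex.exp (lam * (s : ℂ))) -
    ((2 * β₀ * β₁ / τ : ℝ) : ℂ) * Complex.exp (-lam * (τ : ℂ))

/-- `h(x) = sin(x)/x`. -/
noncomputable def hfun (x : ℝ) : ℝ := Real.sin x / x

/-- `x₀`, the smallest `x > 0` with `x = tan x` and `h(x) > 0` (numerically `x₀ ≈ 7.725`). -/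
noncomputable def xZero : ℝ := sInf {x : ℝ | 0 < x ∧ x = Real.tan x ∧ 0 < hfun x}

/-- The system: `sin(ωτ)/(ωτ) = (δ+β₀β₁)/(2β₀β₁)` and `(cos(ωτ) − 1)/(ωτ)² = 1/(2β₀β₁τ)`. -/
def sys (δ β₀ β₁ ω τ : ℝ) : Prop :=
  Real.sin (ω * τ) / (ω * τ) = (δ + β₀ * β₁) / (2 * β₀ * β₁) ∧
  (Real.cos (ω * τ) - 1) / (ω * τ) ^ 2 = 1 / (2 * β₀ * β₁ * τ)

/-- Closed form of `∫_{−τ}^{0} s e^{iωs} ds`. -/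
lemma int_s_exp (ω τ : ℝ) (hω : ω ≠ 0) :
    (∫ s in (-τ)..(0 : ℝ), (s : ℂ) * Complex.exp ((Complex.I * ω) * (s : ℂ)))
      = -1/(Complex.I*ω)^2 + ((τ:ℂ)/(Complex.I*ω) + 1/(Complex.I*ω)^2)
          * Complex.exp ((Complex.I*ω) * ((-τ : ℝ) : ℂ)) := by
  set c : ℂ := Complex.I * ω with hc
  have hcne : c ≠ 0 := by
    simp [hc, Complex.I_ne_zero, Complex.ofReal_eq_zero, hω]
  have D : ∀ x : ℝ, HasDerivAt (fun y : ℝ => ((y : ℂ)/c - 1/c^2) * Complex.exp (c * y))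
      ((x : ℂ) * Complex.exp (c * x)) x := by
    intro x
    have h1 : HasDerivAt (fun y : ℝ => ((y : ℂ)/c - 1/c^2)) (1/c) x :=
      ((hasDerivAt_id (x:ℂ)).comp_ofReal.div_const c).sub_const (1/c^2)
    have h2 : HasDerivAt (fun y : ℝ => Complex.exp (c * y)) (Complex.exp (c*x) * c) x := by
      have := ((Complex.hasDerivAt_exp (c * x)).comp x
        (((hasDerivAt_id (x:ℂ)).const_mul c).comp_ofReal))
      simpa [mul_comm, Function.comp_def] using this
    have := h1.mul h2
    refine this.congr_deriv ?_
    field_simp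
    ring
  have hcont : IntervalIntegrable (fun s : ℝ => (s : ℂ) * Complex.exp (c * s))
      MeasureTheory.volume (-τ) 0 := by
    apply Continuous.intervalIntegrable
    fun_prop
  rw [intervalIntegral.integral_eq_sub_of_hasDerivAt (fun x _ => D x) hcont]
  push_cast
  field_simp
  simp only [zero_mul, Complex.exp_zero]
  ring

/-- transversality: with `x_c = ω_c τ_c`, the quantity
`ν′ = Re(−Δ_τ(iω_c,τ_c)/Δ_λ(iω_c,τ_c))` satisfies
`|Δ_λ(iω_c,τ_c)|² ν′ = (2β₀β₁/τ_c)(x_c cos x_c − sin x_c)/x_c > 0`, hence `ν′ > 0`. -/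
theorem transversality
    (δ β₀ β₁ ω_c τ_c : ℝ) (hδ : 0 < δ) (hβ₀ : 0 < β₀)
    (hβ₁ : β₁ < -δ / (β₀ * (1 - 2 * hfun xZero)))
    (hω_c : 0 < ω_c) (hτ_c : 0 < τ_c)
    (hx_c : ω_c * τ_c ∈ Set.Ioo 0 Real.pi)
    (hsys : sys δ β₀ β₁ ω_c τ_c) :
    ‖charFnD β₀ β₁ τ_c (Complex.I * (ω_c : ℂ))‖ ^ 2 *
        (-(charFnT β₀ β₁ τ_c (Complex.I * (ω_c : ℂ))) /
          charFnD β₀ β₁ τ_c (Complex.I * (ω_c : ℂ))).re =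
      (2 * β₀ * β₁ / τ_c) *
        ((ω_c * τ_c * Real.cos (ω_c * τ_c) - Real.sin (ω_c * τ_c)) / (ω_c * τ_c)) ∧
    0 < (2 * β₀ * β₁ / τ_c) *
        ((ω_c * τ_c * Real.cos (ω_c * τ_c) - Real.sin (ω_c * τ_c)) / (ω_c * τ_c)) ∧
    0 < (-(charFnT β₀ β₁ τ_c (Complex.I * (ω_c : ℂ))) /
          charFnD β₀ β₁ τ_c (Complex.I * (ω_c : ℂ))).re := by
  have hω0 : ω_c ≠ 0 := ne_of_gt hω_c
  have hτ0 : τ_c ≠ 0 := ne_of_gt hτ_c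
  have hωC : (ω_c:ℂ) ≠ 0 := Complex.ofReal_ne_zero.mpr hω0
  have hτC : (τ_c:ℂ) ≠ 0 := Complex.ofReal_ne_zero.mpr hτ0
  have hexp : Complex.exp ((Complex.I * (ω_c:ℂ)) * ((-τ_c : ℝ) : ℂ))
      = ((Real.cos (ω_c*τ_c) : ℝ):ℂ) - ((Real.sin (ω_c*τ_c) : ℝ):ℂ)*Complex.I := by
    rw [show (Complex.I * (ω_c:ℂ)) * ((-τ_c:ℝ):ℂ) = ((-(ω_c*τ_c) : ℝ):ℂ) * Complex.I by
      push_cast; ring, Complex.exp_mul_I]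
    rw [← Complex.ofReal_cos, ← Complex.ofReal_sin, Real.cos_neg, Real.sin_neg]
    push_cast
    ring
  set x := ω_c * τ_c with hxdef
  set co := Real.cos x with hcodef
  set si := Real.sin x with hsidef
  set B := 2 * β₀ * β₁ with hBdef
  have hexp2 : Complex.exp (-(Complex.I * (ω_c:ℂ)) * (τ_c : ℂ))
      = (co:ℂ) - (si:ℂ)*Complex.I := by
    rw [show -(Complex.I*(ω_c:ℂ))*(τ_c:ℂ) = (Complex.I * (ω_c:ℂ)) * ((-τ_c : ℝ):ℂ) by
      push_cast; ring]
    exact hexp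
  have hcne : (Complex.I * (ω_c:ℂ)) ≠ 0 := mul_ne_zero Complex.I_ne_zero hωC
  -- closed forms of Δ_λ and Δ_τ at iω_c
  have hD : charFnD β₀ β₁ τ_c (Complex.I * (ω_c:ℂ))
      = ((1 + B*si/ω_c - (B/τ_c)*(1-co)/ω_c^2 : ℝ) : ℂ)
        + ((B*co/ω_c - (B/τ_c)*si/ω_c^2 : ℝ) : ℂ) * Complex.I := by
    rw [charFnD, int_s_exp ω_c τ_c hω0, hexp]
    push_cast
    rw [Complex.ext_iff]
    constructor <;> simp [mul_pow, ← Complex.ofReal_pow, Complex.I_sq, Complex.div_re,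
      Complex.div_im, Complex.inv_re, Complex.inv_im, Complex.normSq_apply] <;>
      field_simp <;> ring
  have hT : charFnT β₀ β₁ τ_c (Complex.I * (ω_c:ℂ))
      = (((B/(τ_c^2*ω_c))*si - (B/τ_c)*co : ℝ) : ℂ)
        + ((-(B/(τ_c^2*ω_c))*(1-co) + (B/τ_c)*si : ℝ) : ℂ) * Complex.I := by
    rw [charFnT, integral_exp_mul_complex hcne, hexp2]
    simp only [Complex.ofReal_zero, mul_zero, Complex.exp_zero]
    rw [hexp]
    push_cast
    rw [Complex.ext_iff]
    constructor <;> simp [mul_pow, ← Complex.ofReal_pow, Complex.I_sq, Complex.div_re,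
      Complex.div_im, Complex.inv_re, Complex.inv_im, Complex.normSq_apply] <;>
      field_simp <;> ring
  have hDre : (charFnD β₀ β₁ τ_c (Complex.I * (ω_c:ℂ))).re
      = 1 + B*si/ω_c - (B/τ_c)*(1-co)/ω_c^2 := by
    rw [hD]
    simp only [Complex.add_re, Complex.add_im, Complex.mul_re, Complex.mul_im, Complex.I_re,
      Complex.I_im, Complex.ofReal_re, Complex.ofReal_im]
    ring
  have hDim : (charFnD β₀ β₁ τ_c (Complex.I * (ω_c:ℂ))).im
      = B*co/ω_c - (B/τ_c)*si/ω_c^2 := by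
    rw [hD]
    simp only [Complex.add_re, Complex.add_im, Complex.mul_re, Complex.mul_im, Complex.I_re,
      Complex.I_im, Complex.ofReal_re, Complex.ofReal_im]
    ring
  have hTre : (charFnT β₀ β₁ τ_c (Complex.I * (ω_c:ℂ))).re
      = (B/(τ_c^2*ω_c))*si - (B/τ_c)*co := by
    rw [hT]
    simp only [Complex.add_re, Complex.add_im, Complex.mul_re, Complex.mul_im, Complex.I_re,
      Complex.I_im, Complex.ofReal_re, Complex.ofReal_im]
    ring
  have hTim : (charFnT β₀ β₁ τ_c (Complex.I * (ω_c:ℂ))).im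
      = -(B/(τ_c^2*ω_c))*(1-co) + (B/τ_c)*si := by
    rw [hT]
    simp only [Complex.add_re, Complex.add_im, Complex.mul_re, Complex.mul_im, Complex.I_re,
      Complex.I_im, Complex.ofReal_re, Complex.ofReal_im]
    ring
  -- sign facts
  have hx0 : 0 < x := hx_c.1
  have hsin : 0 < si := Real.sin_pos_of_pos_of_lt_pi hx_c.1 hx_c.2
  have hco1 : co < 1 := by
    nlinarith [Real.sin_sq_add_cos_sq x, Real.cos_le_one x, mul_pos hsin hsin]
  have hb : β₀ * β₁ < 0 := by
    have hlhs : (co - 1) / x ^ 2 < 0 :=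
      div_neg_of_neg_of_pos (by linarith) (by positivity)
    rw [hsys.2] at hlhs
    have h2bt : 2 * β₀ * β₁ * τ_c < 0 := by
      by_contra h
      push_neg at h
      have : 0 ≤ 1 / (2 * β₀ * β₁ * τ_c) := by positivity
      linarith
    nlinarith
  have hBneg : B < 0 := by rw [hBdef]; nlinarith
  have hxcs : x * co < si := by
    rcases le_or_gt co 0 with h | h
    · have : x * co ≤ 0 := mul_nonpos_iff.2 (Or.inl ⟨le_of_lt hx0, h⟩)
      linarith
    · have hxlt : x < Real.pi / 2 := by
        by_contra hcon
        push_neg at hcon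
        have : co ≤ 0 := Real.cos_nonpos_of_pi_div_two_le_of_le hcon
          (by nlinarith [Real.pi_pos, hx_c.2])
        linarith
      have := Real.lt_tan hx0 hxlt
      rw [Real.tan_eq_sin_div_cos] at this
      exact (lt_div_iff₀ h).mp this
  -- Im Δ_λ > 0, hence Δ_λ ≠ 0
  have hImD : 0 < B*co/ω_c - (B/τ_c)*si/ω_c^2 := by
    have heq : B*co/ω_c - (B/τ_c)*si/ω_c^2 = (B/(τ_c*ω_c^2)) * (x*co - si) := by
      rw [hxdef]; field_simp
    rw [heq]
    exact mul_pos_of_neg_of_neg (div_neg_of_neg_of_pos hBneg (by positivity)) (by linarith)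
  have hNS : Complex.normSq (charFnD β₀ β₁ τ_c (Complex.I * (ω_c:ℂ)))
      = (1 + B*si/ω_c - (B/τ_c)*(1-co)/ω_c^2)^2 + (B*co/ω_c - (B/τ_c)*si/ω_c^2)^2 := by
    rw [Complex.normSq_apply, hDre, hDim]; ring
  have hNSpos : 0 < (1 + B*si/ω_c - (B/τ_c)*(1-co)/ω_c^2)^2
      + (B*co/ω_c - (B/τ_c)*si/ω_c^2)^2 := by
    nlinarith [sq_nonneg (1 + B*si/ω_c - (B/τ_c)*(1-co)/ω_c^2), mul_pos hImD hImD]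
  -- the main identity
  have hmain : ‖charFnD β₀ β₁ τ_c (Complex.I * (ω_c : ℂ))‖ ^ 2 *
        (-(charFnT β₀ β₁ τ_c (Complex.I * (ω_c : ℂ))) /
          charFnD β₀ β₁ τ_c (Complex.I * (ω_c : ℂ))).re =
      (B / τ_c) * ((x * co - si) / x) := by
    have hNS0 : (1 + B*si/ω_c - (B/τ_c)*(1-co)/ω_c^2)^2
        + (B*co/ω_c - (B/τ_c)*si/ω_c^2)^2 ≠ 0 := ne_of_gt hNSpos
    have hcancel : ∀ (N a b : ℝ), N ≠ 0 → N * (a/N + b/N) = a + b := by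
      intro N a b hN; field_simp
    rw [Complex.sq_norm, Complex.div_re, hNS, Complex.neg_re, Complex.neg_im,
      hDre, hDim, hTre, hTim, hxdef, hcancel _ _ _ hNS0]
    field_simp
    ring
  have hP : 0 < (B / τ_c) * ((x * co - si) / x) :=
    mul_pos_of_neg_of_neg (div_neg_of_neg_of_pos hBneg hτ_c)
      (div_neg_of_neg_of_pos (by linarith) hx0)
  refine ⟨hmain, hP, ?_⟩
  have habs : 0 < ‖charFnD β₀ β₁ τ_c (Complex.I * (ω_c : ℂ))‖ ^ 2 := by
    rw [Complex.sq_norm, hNS]; exact hNSpos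
  by_contra h
  push_neg at h
  have := mul_nonpos_of_nonneg_of_nonpos (le_of_lt habs) h
  rw [hmain] at this
  linarith
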